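/- If C is a semi-additive category endowed with a symmetric monoidal structure whose tensor product is additive (monoid-homomorphic) in each variable, then the group completion C⁻¹ carries a unique symmetric monoidal structure additive in each variable such that the canonical functor α : C → C⁻¹ is strict symmetric monoidal. -/

import Mathlib

open CategoryTheory CategoryTheory.Limits CategoryTheory.MonoidalCategory

universe v u v' u'

/-- A category enriched in commutative monoids: each Hom-set is a commutative additive
monoid, and composition is bilinear and compatible with the zero morphisms. -/
class CMonEnriched (C : Type u) [Category.{v} C] where
  homMonoid : ∀ x y : C, AddCommMonoid (x ⟶ y)
  add_comp : ∀ ⦃x y z : C⦄ (f g : x ⟶ y) (h : y ⟶ z), (f + g) ≫ h = f ≫ h + g ≫ h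
  comp_add : ∀ ⦃x y z : C⦄ (f : x ⟶ y) (g h : y ⟶ z), f ≫ (g + h) = f ≫ g + f ≫ h
  zero_comp : ∀ ⦃x y z : C⦄ (h : y ⟶ z), (0 : x ⟶ y) ≫ h = 0
  comp_zero : ∀ ⦃x y z : C⦄ (f : x ⟶ y), f ≫ (0 : y ⟶ z) = 0

attribute [instance] CMonEnriched.homMonoid

/-- The zero-morphism structure underlying a commutative-monoid enrichment. -/
instance (priority := 100) CMonEnriched.toHasZeroMorphisms (C : Type u) [Category.{v} C]
    [CMonEnriched C] : HasZeroMorphisms C where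
  zero _ _ := ⟨0⟩
  comp_zero f _ := CMonEnriched.comp_zero f
  zero_comp _ _ _ h := CMonEnriched.zero_comp h

set_option linter.unusedSectionVars false
section Clem
variable {C : Type u} [Category.{v} C] [MonoidalCategory C]

theorem wl_congr {a a' b b' c c' : C} (ha : a = a') (hb : b = b') (hc : c = c') (f : b' ⟶ c') :
    a ◁ (eqToHom hb ≫ f ≫ eqToHom hc.symm)
      = eqToHom (by rw [ha, hb]) ≫ (a' ◁ f) ≫ eqToHom (by rw [ha, hc]) := by
  subst ha hb hc; simp

theorem wr_congr {a a' b b' c c' : C} (ha : a = a') (hb : b = b') (hc : c = c') (f : b' ⟶ c') :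
    (eqToHom hb ≫ f ≫ eqToHom hc.symm) ▷ a
      = eqToHom (by rw [ha, hb]) ≫ (f ▷ a') ≫ eqToHom (by rw [ha, hc]) := by
  subst ha hb hc; simp

theorem assoc_congr {a a' b b' c c' : C} (ha : a = a') (hb : b = b') (hc : c = c') :
    (α_ a b c).hom = eqToHom (by rw [ha, hb, hc]) ≫ (α_ a' b' c').hom ≫ eqToHom (by rw [ha, hb, hc]) := by
  subst ha hb hc; simp

theorem assoc_inv_congr {a a' b b' c c' : C} (ha : a = a') (hb : b = b') (hc : c = c') :
    (α_ a b c).inv = eqToHom (by rw [ha, hb, hc]) ≫ (α_ a' b' c').inv ≫ eqToHom (by rw [ha, hb, hc]) := by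
  subst ha hb hc; simp

theorem lu_congr {a a' : C} (ha : a = a') :
    (λ_ a).hom = eqToHom (by rw [ha]) ≫ (λ_ a').hom ≫ eqToHom (by rw [ha]) := by
  subst ha; simp

theorem ru_congr {a a' : C} (ha : a = a') :
    (ρ_ a).hom = eqToHom (by rw [ha]) ≫ (ρ_ a').hom ≫ eqToHom (by rw [ha]) := by
  subst ha; simp

theorem braid_congr [BraidedCategory C] {a a' b b' : C} (ha : a = a') (hb : b = b') :
    (β_ a b).hom = eqToHom (by rw [ha, hb]) ≫ (β_ a' b').hom ≫ eqToHom (by rw [ha, hb]) := by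
  subst ha hb; simp
end Clem

section GCdev

variable {C : Type u} [Category.{v} C] [CMonEnriched C] [MonoidalCategory C]
variable {D : Type u'} [Category.{v'} D] [Preadditive D]

structure GCH (α : C ⥤ D) : Prop where
  hwl : ∀ (x : C) ⦃y z : C⦄ (f g : y ⟶ z), x ◁ (f + g) = x ◁ f + x ◁ g
  hwl0 : ∀ (x : C) ⦃y z : C⦄, x ◁ (0 : y ⟶ z) = 0
  hwr : ∀ ⦃y z : C⦄ (f g : y ⟶ z) (x : C), (f + g) ▷ x = f ▷ x + g ▷ x
  hwr0 : ∀ ⦃y z : C⦄ (x : C), (0 : y ⟶ z) ▷ x = 0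
  hobj : Function.Bijective α.obj
  hadd : ∀ {x y : C} (f g : x ⟶ y), α.map (f + g) = α.map f + α.map g
  hzero : ∀ x y : C, α.map (0 : x ⟶ y) = 0
  hsurj : ∀ {x y : C} (g : α.obj x ⟶ α.obj y), ∃ f f' : x ⟶ y, g = α.map f - α.map f'
  hker : ∀ {x y : C} (f f' : x ⟶ y), α.map f = α.map f' ↔ ∃ h : x ⟶ y, f + h = f' + h

namespace GCH

variable {α : C ⥤ D} (H : GCH α)
include H

theorem welldef {a b c d : C} {T : (a ⟶ b) → (c ⟶ d)}
    (hT : ∀ f g, T (f + g) = T f + T g) {f f' g g' : a ⟶ b}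
    (hfg : α.map f - α.map f' = α.map g - α.map g') :
    α.map (T f) - α.map (T f') = α.map (T g) - α.map (T g') := by
  rw [sub_eq_sub_iff_add_eq_add, ← H.hadd, ← H.hadd] at hfg
  obtain ⟨h, hh⟩ := (H.hker _ _).1 hfg
  rw [sub_eq_sub_iff_add_eq_add, ← H.hadd, ← H.hadd]
  refine (H.hker _ _).2 ⟨T h, ?_⟩
  rw [← hT, ← hT, ← hT, ← hT, hh]

noncomputable def lift {a b c d : C} (T : (a ⟶ b) → (c ⟶ d))
    (g : α.obj a ⟶ α.obj b) : α.obj c ⟶ α.obj d :=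
  α.map (T (H.hsurj g).choose) - α.map (T (H.hsurj g).choose_spec.choose)

theorem lift_eq {a b c d : C} {T : (a ⟶ b) → (c ⟶ d)}
    (hT : ∀ f g, T (f + g) = T f + T g) {f f' : a ⟶ b} {g : α.obj a ⟶ α.obj b}
    (hg : g = α.map f - α.map f') :
    H.lift T g = α.map (T f) - α.map (T f') :=
  H.welldef hT ((H.hsurj g).choose_spec.choose_spec.symm.trans hg)

theorem lift_map {a b c d : C} {T : (a ⟶ b) → (c ⟶ d)}
    (hT : ∀ f g, T (f + g) = T f + T g) (hT0 : T 0 = 0) (f : a ⟶ b) :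
    H.lift T (α.map f) = α.map (T f) := by
  rw [H.lift_eq hT (f := f) (f' := 0) (by rw [H.hzero, sub_zero]), hT0, H.hzero, sub_zero]

theorem lift_sub {a b c d : C} {T : (a ⟶ b) → (c ⟶ d)}
    (hT : ∀ f g, T (f + g) = T f + T g) (g g' : α.obj a ⟶ α.obj b) :
    H.lift T (g - g') = H.lift T g - H.lift T g' := by
  obtain ⟨f, f', hf⟩ := H.hsurj g
  obtain ⟨k, k', hk⟩ := H.hsurj g'
  rw [H.lift_eq hT hf, H.lift_eq hT hk,
    H.lift_eq hT (f := f + k') (f' := f' + k)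
      (by rw [H.hadd, H.hadd, hf, hk]; abel), hT, hT, H.hadd, H.hadd]
  abel

theorem lift_add {a b c d : C} {T : (a ⟶ b) → (c ⟶ d)}
    (hT : ∀ f g, T (f + g) = T f + T g) (g g' : α.obj a ⟶ α.obj b) :
    H.lift T (g + g') = H.lift T g + H.lift T g' := by
  obtain ⟨f, f', hf⟩ := H.hsurj g
  obtain ⟨k, k', hk⟩ := H.hsurj g'
  rw [H.lift_eq hT hf, H.lift_eq hT hk,
    H.lift_eq hT (f := f + k) (f' := f' + k')
      (by rw [H.hadd, H.hadd, hf, hk]; abel), hT, hT, H.hadd, H.hadd]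
  abel

noncomputable def inv (X : D) : C := (Equiv.ofBijective α.obj H.hobj).symm X

theorem epsilon (X : D) : α.obj (H.inv X) = X :=
  (Equiv.ofBijective α.obj H.hobj).apply_symm_apply X

theorem eta (x : C) : H.inv (α.obj x) = x :=
  (Equiv.ofBijective α.obj H.hobj).symm_apply_apply x

theorem obj_surj (X : D) : ∃ x : C, X = α.obj x := ⟨H.inv X, (H.epsilon X).symm⟩

/-- canonical morphisms of `D` induced by morphisms of `C`, with endpoint adjustment. -/
def Phi {α : C ⥤ D} {x y : C} {X Y : D} (p : X = α.obj x) (q : Y = α.obj y) (f : x ⟶ y) :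
    X ⟶ Y :=
  eqToHom p ≫ α.map f ≫ eqToHom q.symm

theorem map_eq_Phi {x y : C} (f : x ⟶ y) : α.map f = Phi (α := α) rfl rfl f := by
  simp [Phi]

theorem Phi_congr {x y : C} {X Y : D} {p p' : X = α.obj x} {q q' : Y = α.obj y}
    {f g : x ⟶ y} (h : f = g) : Phi (α := α) p q f = Phi p' q' g := by
  subst h; rfl

theorem Phi_comp {x y z : C} {X Y Z : D} (p : X = α.obj x) (q : Y = α.obj y)
    (r : Z = α.obj z) (f : x ⟶ y) (g : y ⟶ z) :
    Phi (α := α) p q f ≫ Phi q r g = Phi p r (f ≫ g) := by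
  subst p q r; simp [Phi]

theorem Phi_add {x y : C} {X Y : D} (p : X = α.obj x) (q : Y = α.obj y) (f g : x ⟶ y) :
    Phi (α := α) p q (f + g) = Phi p q f + Phi p q g := by
  subst p q; simp [Phi, H.hadd]

theorem Phi_id {x : C} {X : D} (p : X = α.obj x) :
    Phi (α := α) p p (𝟙 x) = 𝟙 X := by
  subst p; simp [Phi]

/-- the conjugate of a morphism of `D` lying between chosen preimages. -/
noncomputable def conj {Y Z : D} (g : Y ⟶ Z) : α.obj (H.inv Y) ⟶ α.obj (H.inv Z) :=
  eqToHom (H.epsilon Y) ≫ g ≫ eqToHom (H.epsilon Z).symm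

theorem conj_sub {Y Z : D} (g g' : Y ⟶ Z) : H.conj (g - g') = H.conj g - H.conj g' := by
  simp [conj, Preadditive.sub_comp, Preadditive.comp_sub]

theorem conj_add {Y Z : D} (g g' : Y ⟶ Z) : H.conj (g + g') = H.conj g + H.conj g' := by
  simp [conj, Preadditive.add_comp, Preadditive.comp_add]

theorem conj_Phi {x y : C} {X Y : D} (p : X = α.obj x) (q : Y = α.obj y) (f : x ⟶ y) :
    H.conj (Phi p q f)
      = α.map (eqToHom (by rw [p, H.eta]) ≫ f ≫ eqToHom (by rw [q, H.eta])) := by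
  subst p q
  simp [conj, Phi, eqToHom_map]

/-- tensor product of objects in `D`. -/
noncomputable def tObj (X Y : D) : D := α.obj (H.inv X ⊗ H.inv Y)

theorem hto (x y : C) : α.obj (x ⊗ y) = H.tObj (α.obj x) (α.obj y) := by
  simp [tObj, H.eta]

/-- left whiskering in `D`. -/
noncomputable def wL (X : D) {Y Z : D} (g : Y ⟶ Z) : H.tObj X Y ⟶ H.tObj X Z :=
  H.lift (fun f => H.inv X ◁ f) (H.conj g)

/-- right whiskering in `D`. -/
noncomputable def wR {Y Z : D} (g : Y ⟶ Z) (X : D) : H.tObj Y X ⟶ H.tObj Z X :=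
  H.lift (fun f => f ▷ H.inv X) (H.conj g)

theorem wL_sub (X : D) {Y Z : D} (g g' : Y ⟶ Z) :
    H.wL X (g - g') = H.wL X g - H.wL X g' := by
  rw [wL, wL, wL, H.conj_sub, H.lift_sub (fun f g => H.hwl _ f g)]
  rfl

theorem wL_add (X : D) {Y Z : D} (g g' : Y ⟶ Z) :
    H.wL X (g + g') = H.wL X g + H.wL X g' := by
  rw [wL, wL, wL, H.conj_add, H.lift_add (fun f g => H.hwl _ f g)]
  rfl

theorem wR_sub {Y Z : D} (g g' : Y ⟶ Z) (X : D) :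
    H.wR (g - g') X = H.wR g X - H.wR g' X := by
  rw [wR, wR, wR, H.conj_sub, H.lift_sub (fun f g => H.hwr f g _)]
  rfl

theorem wR_add {Y Z : D} (g g' : Y ⟶ Z) (X : D) :
    H.wR (g + g') X = H.wR g X + H.wR g' X := by
  rw [wR, wR, wR, H.conj_add, H.lift_add (fun f g => H.hwr f g _)]
  rfl

theorem wL_Phi (x : C) {y z : C} {Y Z : D} (p : Y = α.obj y) (q : Z = α.obj z) (f : y ⟶ z) :
    H.wL (α.obj x) (Phi p q f)
      = Phi (show H.tObj (α.obj x) Y = α.obj (x ⊗ y) by rw [p, ← H.hto])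
          (show H.tObj (α.obj x) Z = α.obj (x ⊗ z) by rw [q, ← H.hto]) (x ◁ f) := by
  rw [wL, H.conj_Phi, H.lift_map (fun f g => H.hwl _ f g)
    (H.hwl0 _ (y:=_) (z:=_))]
  rw [wl_congr (H.eta x) (show H.inv Y = y by rw [p, H.eta]) (show H.inv Z = z by rw [q, H.eta])]
  subst p q
  simp [Phi, eqToHom_map]
  rfl

theorem wR_Phi (x : C) {y z : C} {Y Z : D} (p : Y = α.obj y) (q : Z = α.obj z) (f : y ⟶ z) :
    H.wR (Phi p q f) (α.obj x)
      = Phi (show H.tObj Y (α.obj x) = α.obj (y ⊗ x) by rw [p, ← H.hto])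
          (show H.tObj Z (α.obj x) = α.obj (z ⊗ x) by rw [q, ← H.hto]) (f ▷ x) := by
  rw [wR, H.conj_Phi, H.lift_map (fun f g => H.hwr f g _)
    (H.hwr0 (y:=_) (z:=_) _)]
  rw [wr_congr (H.eta x) (show H.inv Y = y by rw [p, H.eta]) (show H.inv Z = z by rw [q, H.eta])]
  subst p q
  simp [Phi, eqToHom_map]
  rfl

theorem wL_Phi' {x : C} {X : D} (p0 : X = α.obj x) {y z : C} {Y Z : D}
    (p : Y = α.obj y) (q : Z = α.obj z) (f : y ⟶ z) :
    H.wL X (Phi p q f)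
      = Phi (show H.tObj X Y = α.obj (x ⊗ y) by rw [p0, p, ← H.hto])
          (show H.tObj X Z = α.obj (x ⊗ z) by rw [p0, q, ← H.hto]) (x ◁ f) := by
  subst p0; exact H.wL_Phi x p q f

theorem wR_Phi' {x : C} {X : D} (p0 : X = α.obj x) {y z : C} {Y Z : D}
    (p : Y = α.obj y) (q : Z = α.obj z) (f : y ⟶ z) :
    H.wR (Phi p q f) X
      = Phi (show H.tObj Y X = α.obj (y ⊗ x) by rw [p0, p, ← H.hto])
          (show H.tObj Z X = α.obj (z ⊗ x) by rw [p0, q, ← H.hto]) (f ▷ x) := by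
  subst p0; exact H.wR_Phi x p q f

/-- the associator of `D`. -/
noncomputable def aI (X Y Z : D) : H.tObj (H.tObj X Y) Z ≅ H.tObj X (H.tObj Y Z) :=
  eqToIso (show H.tObj (H.tObj X Y) Z = α.obj ((H.inv X ⊗ H.inv Y) ⊗ H.inv Z) by
      simp [tObj, H.eta]) ≪≫
    α.mapIso (α_ (H.inv X) (H.inv Y) (H.inv Z)) ≪≫
    eqToIso (show α.obj (H.inv X ⊗ (H.inv Y ⊗ H.inv Z)) = H.tObj X (H.tObj Y Z) by
      simp [tObj, H.eta])

theorem aI_hom_Phi {x y z : C} {X Y Z : D} (p : X = α.obj x) (q : Y = α.obj y)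
    (r : Z = α.obj z) :
    (H.aI X Y Z).hom
      = Phi (show H.tObj (H.tObj X Y) Z = α.obj ((x ⊗ y) ⊗ z) by
            rw [p, q, r, ← H.hto, ← H.hto])
          (show H.tObj X (H.tObj Y Z) = α.obj (x ⊗ (y ⊗ z)) by
            rw [p, q, r, ← H.hto, ← H.hto]) (α_ x y z).hom := by
  subst p q r
  dsimp [aI]
  rw [assoc_congr (H.eta x) (H.eta y) (H.eta z)]
  simp [Phi, eqToHom_map]

theorem aI_inv_Phi {x y z : C} {X Y Z : D} (p : X = α.obj x) (q : Y = α.obj y)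
    (r : Z = α.obj z) :
    (H.aI X Y Z).inv
      = Phi (show H.tObj X (H.tObj Y Z) = α.obj (x ⊗ (y ⊗ z)) by
            rw [p, q, r, ← H.hto, ← H.hto])
          (show H.tObj (H.tObj X Y) Z = α.obj ((x ⊗ y) ⊗ z) by
            rw [p, q, r, ← H.hto, ← H.hto]) (α_ x y z).inv := by
  subst p q r
  dsimp [aI]
  rw [assoc_inv_congr (H.eta x) (H.eta y) (H.eta z)]
  simp [Phi, eqToHom_map]

/-- the left unitor of `D`. -/
noncomputable def lI (X : D) : H.tObj (α.obj (𝟙_ C)) X ≅ X :=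
  eqToIso (show H.tObj (α.obj (𝟙_ C)) X = α.obj (𝟙_ C ⊗ H.inv X) by simp [tObj, H.eta]) ≪≫
    α.mapIso (λ_ (H.inv X)) ≪≫ eqToIso (H.epsilon X)

theorem lI_hom_Phi {x : C} {X : D} (p : X = α.obj x) :
    (H.lI X).hom
      = Phi (show H.tObj (α.obj (𝟙_ C)) X = α.obj (𝟙_ C ⊗ x) by rw [p, ← H.hto])
          (show X = α.obj x from p) (λ_ x).hom := by
  subst p
  dsimp [lI]
  rw [lu_congr (H.eta x)]
  simp [Phi, eqToHom_map]

/-- the right unitor of `D`. -/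
noncomputable def rI (X : D) : H.tObj X (α.obj (𝟙_ C)) ≅ X :=
  eqToIso (show H.tObj X (α.obj (𝟙_ C)) = α.obj (H.inv X ⊗ 𝟙_ C) by simp [tObj, H.eta]) ≪≫
    α.mapIso (ρ_ (H.inv X)) ≪≫ eqToIso (H.epsilon X)

theorem rI_hom_Phi {x : C} {X : D} (p : X = α.obj x) :
    (H.rI X).hom
      = Phi (show H.tObj X (α.obj (𝟙_ C)) = α.obj (x ⊗ 𝟙_ C) by rw [p, ← H.hto])
          (show X = α.obj x from p) (ρ_ x).hom := by
  subst p
  dsimp [rI]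
  rw [ru_congr (H.eta x)]
  simp [Phi, eqToHom_map]

theorem wL_id (X Y : D) : H.wL X (𝟙 Y) = 𝟙 (H.tObj X Y) := by
  obtain ⟨x, rfl⟩ := H.obj_surj X
  obtain ⟨y, rfl⟩ := H.obj_surj Y
  rw [show (𝟙 (α.obj y)) = Phi (α := α) rfl rfl (𝟙 y) from (H.Phi_id rfl).symm,
    H.wL_Phi' rfl rfl rfl, MonoidalCategory.whiskerLeft_id]
  exact H.Phi_id _

theorem wR_id (X Y : D) : H.wR (𝟙 X) Y = 𝟙 (H.tObj X Y) := by
  obtain ⟨x, rfl⟩ := H.obj_surj X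
  obtain ⟨y, rfl⟩ := H.obj_surj Y
  rw [show (𝟙 (α.obj x)) = Phi (α := α) rfl rfl (𝟙 x) from (H.Phi_id rfl).symm,
    H.wR_Phi' rfl rfl rfl, MonoidalCategory.id_whiskerRight]
  exact H.Phi_id _

theorem wL_comp (X : D) {Y Z W : D} (g : Y ⟶ Z) (g' : Z ⟶ W) :
    H.wL X (g ≫ g') = H.wL X g ≫ H.wL X g' := by
  obtain ⟨x, rfl⟩ := H.obj_surj X
  obtain ⟨y, rfl⟩ := H.obj_surj Y
  obtain ⟨z, rfl⟩ := H.obj_surj Z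
  obtain ⟨w, rfl⟩ := H.obj_surj W
  obtain ⟨u, u', rfl⟩ := H.hsurj g
  obtain ⟨v, v', rfl⟩ := H.hsurj g'
  simp only [H.map_eq_Phi, Preadditive.sub_comp, Preadditive.comp_sub,
    H.wL_sub, H.wL_Phi' rfl, H.Phi_comp, MonoidalCategory.whiskerLeft_comp]

theorem wR_comp {Y Z W : D} (g : Y ⟶ Z) (g' : Z ⟶ W) (X : D) :
    H.wR (g ≫ g') X = H.wR g X ≫ H.wR g' X := by
  obtain ⟨x, rfl⟩ := H.obj_surj X
  obtain ⟨y, rfl⟩ := H.obj_surj Y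
  obtain ⟨z, rfl⟩ := H.obj_surj Z
  obtain ⟨w, rfl⟩ := H.obj_surj W
  obtain ⟨u, u', rfl⟩ := H.hsurj g
  obtain ⟨v, v', rfl⟩ := H.hsurj g'
  simp only [H.map_eq_Phi, Preadditive.sub_comp, Preadditive.comp_sub,
    H.wR_sub, H.wR_Phi' rfl, H.Phi_comp, MonoidalCategory.comp_whiskerRight]

theorem whisk_exch {W X Y Z : D} (f : W ⟶ X) (g : Y ⟶ Z) :
    H.wR f Y ≫ H.wL X g = H.wL W g ≫ H.wR f Z := by
  obtain ⟨w, rfl⟩ := H.obj_surj W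
  obtain ⟨x, rfl⟩ := H.obj_surj X
  obtain ⟨y, rfl⟩ := H.obj_surj Y
  obtain ⟨z, rfl⟩ := H.obj_surj Z
  obtain ⟨u, u', rfl⟩ := H.hsurj f
  obtain ⟨v, v', rfl⟩ := H.hsurj g
  simp only [H.map_eq_Phi, H.wR_sub, H.wL_sub, H.wR_Phi' rfl, H.wL_Phi' rfl,
    Preadditive.sub_comp, Preadditive.comp_sub, H.Phi_comp, MonoidalCategory.whisker_exchange]
  abel

theorem lu_nat {X Y : D} (f : X ⟶ Y) :
    H.wL (α.obj (𝟙_ C)) f ≫ (H.lI Y).hom = (H.lI X).hom ≫ f := by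
  obtain ⟨x, rfl⟩ := H.obj_surj X
  obtain ⟨y, rfl⟩ := H.obj_surj Y
  obtain ⟨u, u', rfl⟩ := H.hsurj f
  simp only [H.map_eq_Phi, H.wL_sub, H.wL_Phi' rfl, H.lI_hom_Phi rfl,
    Preadditive.sub_comp, Preadditive.comp_sub, H.Phi_comp,
    MonoidalCategory.leftUnitor_naturality]

theorem ru_nat {X Y : D} (f : X ⟶ Y) :
    H.wR f (α.obj (𝟙_ C)) ≫ (H.rI Y).hom = (H.rI X).hom ≫ f := by
  obtain ⟨x, rfl⟩ := H.obj_surj X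
  obtain ⟨y, rfl⟩ := H.obj_surj Y
  obtain ⟨u, u', rfl⟩ := H.hsurj f
  simp only [H.map_eq_Phi, H.wR_sub, H.wR_Phi' rfl, H.rI_hom_Phi rfl,
    Preadditive.sub_comp, Preadditive.comp_sub, H.Phi_comp,
    MonoidalCategory.rightUnitor_naturality]

theorem an_l {X X' : D} (f : X ⟶ X') (Y Z : D) :
    H.wR (H.wR f Y) Z ≫ (H.aI X' Y Z).hom = (H.aI X Y Z).hom ≫ H.wR f (H.tObj Y Z) := by
  obtain ⟨x, rfl⟩ := H.obj_surj X
  obtain ⟨x', rfl⟩ := H.obj_surj X'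
  obtain ⟨y, rfl⟩ := H.obj_surj Y
  obtain ⟨z, rfl⟩ := H.obj_surj Z
  obtain ⟨u, u', rfl⟩ := H.hsurj f
  simp only [H.map_eq_Phi, H.wR_sub, H.wR_Phi' rfl, H.wR_Phi' (H.hto y z).symm,
    H.aI_hom_Phi rfl rfl rfl, Preadditive.sub_comp, Preadditive.comp_sub, H.Phi_comp,
    MonoidalCategory.associator_naturality_left]

theorem an_m (X : D) {Y Y' : D} (f : Y ⟶ Y') (Z : D) :
    H.wR (H.wL X f) Z ≫ (H.aI X Y' Z).hom = (H.aI X Y Z).hom ≫ H.wL X (H.wR f Z) := by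
  obtain ⟨x, rfl⟩ := H.obj_surj X
  obtain ⟨y, rfl⟩ := H.obj_surj Y
  obtain ⟨y', rfl⟩ := H.obj_surj Y'
  obtain ⟨z, rfl⟩ := H.obj_surj Z
  obtain ⟨u, u', rfl⟩ := H.hsurj f
  simp only [H.map_eq_Phi, H.wR_sub, H.wL_sub, H.wR_Phi' rfl, H.wL_Phi' rfl,
    H.aI_hom_Phi rfl rfl rfl, Preadditive.sub_comp, Preadditive.comp_sub, H.Phi_comp,
    MonoidalCategory.associator_naturality_middle]

theorem an_r (X Y : D) {Z Z' : D} (f : Z ⟶ Z') :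
    H.wL (H.tObj X Y) f ≫ (H.aI X Y Z').hom = (H.aI X Y Z).hom ≫ H.wL X (H.wL Y f) := by
  obtain ⟨x, rfl⟩ := H.obj_surj X
  obtain ⟨y, rfl⟩ := H.obj_surj Y
  obtain ⟨z, rfl⟩ := H.obj_surj Z
  obtain ⟨z', rfl⟩ := H.obj_surj Z'
  obtain ⟨u, u', rfl⟩ := H.hsurj f
  simp only [H.map_eq_Phi, H.wL_sub, H.wL_Phi' rfl, H.wL_Phi' (H.hto x y).symm,
    H.aI_hom_Phi rfl rfl rfl, Preadditive.sub_comp, Preadditive.comp_sub, H.Phi_comp,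
    MonoidalCategory.associator_naturality_right]

theorem pent (W X Y Z : D) :
    H.wR (H.aI W X Y).hom Z ≫ (H.aI W (H.tObj X Y) Z).hom ≫ H.wL W (H.aI X Y Z).hom
      = (H.aI (H.tObj W X) Y Z).hom ≫ (H.aI W X (H.tObj Y Z)).hom := by
  obtain ⟨w, rfl⟩ := H.obj_surj W
  obtain ⟨x, rfl⟩ := H.obj_surj X
  obtain ⟨y, rfl⟩ := H.obj_surj Y
  obtain ⟨z, rfl⟩ := H.obj_surj Z
  simp only [H.aI_hom_Phi rfl rfl rfl, H.aI_hom_Phi (H.hto w x).symm rfl rfl,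
    H.aI_hom_Phi rfl (H.hto x y).symm rfl, H.aI_hom_Phi rfl rfl (H.hto y z).symm,
    H.wR_Phi' rfl, H.wL_Phi' rfl, H.Phi_comp, MonoidalCategory.pentagon]

theorem tri (X Y : D) :
    (H.aI X (α.obj (𝟙_ C)) Y).hom ≫ H.wL X (H.lI Y).hom = H.wR (H.rI X).hom Y := by
  obtain ⟨x, rfl⟩ := H.obj_surj X
  obtain ⟨y, rfl⟩ := H.obj_surj Y
  simp only [H.aI_hom_Phi rfl rfl rfl, H.lI_hom_Phi rfl, H.rI_hom_Phi rfl,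
    H.wL_Phi' rfl, H.wR_Phi' rfl, H.Phi_comp, MonoidalCategory.triangle]

section Braided
variable [SymmetricCategory C]

/-- the braiding of `D`. -/
noncomputable def bI (X Y : D) : H.tObj X Y ≅ H.tObj Y X :=
  α.mapIso (β_ (H.inv X) (H.inv Y))

theorem bI_hom_Phi {x y : C} {X Y : D} (p : X = α.obj x) (q : Y = α.obj y) :
    (H.bI X Y).hom
      = Phi (show H.tObj X Y = α.obj (x ⊗ y) by rw [p, q, ← H.hto])
          (show H.tObj Y X = α.obj (y ⊗ x) by rw [p, q, ← H.hto]) (β_ x y).hom := by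
  subst p q
  dsimp [bI]
  rw [braid_congr (H.eta x) (H.eta y)]
  simp [Phi, eqToHom_map]
  rfl

theorem br_nat_r (X : D) {Y Z : D} (f : Y ⟶ Z) :
    H.wL X f ≫ (H.bI X Z).hom = (H.bI X Y).hom ≫ H.wR f X := by
  obtain ⟨x, rfl⟩ := H.obj_surj X
  obtain ⟨y, rfl⟩ := H.obj_surj Y
  obtain ⟨z, rfl⟩ := H.obj_surj Z
  obtain ⟨u, u', rfl⟩ := H.hsurj f
  simp only [H.map_eq_Phi, H.wL_sub, H.wR_sub, H.wL_Phi' rfl, H.wR_Phi' rfl,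
    H.bI_hom_Phi rfl rfl, Preadditive.sub_comp, Preadditive.comp_sub, H.Phi_comp,
    BraidedCategory.braiding_naturality_right]

theorem br_nat_l {X Y : D} (f : X ⟶ Y) (Z : D) :
    H.wR f Z ≫ (H.bI Y Z).hom = (H.bI X Z).hom ≫ H.wL Z f := by
  obtain ⟨x, rfl⟩ := H.obj_surj X
  obtain ⟨y, rfl⟩ := H.obj_surj Y
  obtain ⟨z, rfl⟩ := H.obj_surj Z
  obtain ⟨u, u', rfl⟩ := H.hsurj f
  simp only [H.map_eq_Phi, H.wL_sub, H.wR_sub, H.wL_Phi' rfl, H.wR_Phi' rfl,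
    H.bI_hom_Phi rfl rfl, Preadditive.sub_comp, Preadditive.comp_sub, H.Phi_comp,
    BraidedCategory.braiding_naturality_left]

theorem hex_fwd (X Y Z : D) :
    (H.aI X Y Z).hom ≫ (H.bI X (H.tObj Y Z)).hom ≫ (H.aI Y Z X).hom
      = H.wR (H.bI X Y).hom Z ≫ (H.aI Y X Z).hom ≫ H.wL Y (H.bI X Z).hom := by
  obtain ⟨x, rfl⟩ := H.obj_surj X
  obtain ⟨y, rfl⟩ := H.obj_surj Y
  obtain ⟨z, rfl⟩ := H.obj_surj Z
  simp only [H.aI_hom_Phi rfl rfl rfl, H.bI_hom_Phi rfl (H.hto y z).symm,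
    H.bI_hom_Phi rfl rfl, H.wR_Phi' rfl, H.wL_Phi' rfl, H.Phi_comp,
    BraidedCategory.hexagon_forward]

theorem hex_rev (X Y Z : D) :
    (H.aI X Y Z).inv ≫ (H.bI (H.tObj X Y) Z).hom ≫ (H.aI Z X Y).inv
      = H.wL X (H.bI Y Z).hom ≫ (H.aI X Z Y).inv ≫ H.wR (H.bI X Z).hom Y := by
  obtain ⟨x, rfl⟩ := H.obj_surj X
  obtain ⟨y, rfl⟩ := H.obj_surj Y
  obtain ⟨z, rfl⟩ := H.obj_surj Z
  simp only [H.aI_inv_Phi rfl rfl rfl, H.bI_hom_Phi (H.hto x y).symm rfl,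
    H.bI_hom_Phi rfl rfl, H.wR_Phi' rfl, H.wL_Phi' rfl, H.Phi_comp,
    BraidedCategory.hexagon_reverse]

theorem symm_ax (X Y : D) : (H.bI X Y).hom ≫ (H.bI Y X).hom = 𝟙 (H.tObj X Y) := by
  obtain ⟨x, rfl⟩ := H.obj_surj X
  obtain ⟨y, rfl⟩ := H.obj_surj Y
  simp only [H.bI_hom_Phi rfl rfl, H.Phi_comp, SymmetricCategory.symmetry]
  exact H.Phi_id _

end Braided

/-- the monoidal structure on the group completion. -/
noncomputable def mcat : MonoidalCategory D where
  tensorObj := H.tObj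
  whiskerLeft := H.wL
  whiskerRight := H.wR
  tensorHom f g := H.wR f _ ≫ H.wL _ g
  tensorUnit := α.obj (𝟙_ C)
  associator := H.aI
  leftUnitor := H.lI
  rightUnitor := H.rI
  tensorHom_def _ _ := rfl
  id_tensorHom_id X Y := by
    rw [H.wR_id, H.wL_id, Category.comp_id]
  tensorHom_comp_tensorHom f₁ f₂ g₁ g₂ := by
    symm
    rw [H.wR_comp, H.wL_comp, Category.assoc]
    slice_rhs 2 3 => rw [← H.whisk_exch]
    simp only [Category.assoc]
  whiskerLeft_id := H.wL_id
  id_whiskerRight := H.wR_id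
  associator_naturality f₁ f₂ f₃ := by
    rw [H.wR_comp, Category.assoc, Category.assoc]
    slice_lhs 3 4 => rw [H.an_r]
    slice_lhs 2 3 => rw [H.an_m]
    slice_lhs 1 2 => rw [H.an_l]
    simp only [H.wL_comp, Category.assoc]
  leftUnitor_naturality := H.lu_nat
  rightUnitor_naturality := H.ru_nat
  pentagon := H.pent
  triangle := H.tri

/-- the symmetric structure on the group completion. -/
noncomputable def symcat [SymmetricCategory C] : @SymmetricCategory D _ H.mcat :=
  letI := H.mcat
  { braiding := H.bI
    braiding_naturality_right := H.br_nat_r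
    braiding_naturality_left := H.br_nat_l
    hexagon_forward := H.hex_fwd
    hexagon_reverse := H.hex_rev
    symmetry := H.symm_ax }

theorem strict_tensor {x y x' y' : C} (f : x ⟶ x') (g : y ⟶ y') :
    α.map (f ⊗ₘ g)
      = eqToHom (H.hto x y) ≫ (H.wR (α.map f) (α.obj y) ≫ H.wL (α.obj x') (α.map g)) ≫
          eqToHom (H.hto x' y').symm := by
  simp only [H.map_eq_Phi, H.wR_Phi' rfl, H.wL_Phi' rfl, H.Phi_comp,
    ← MonoidalCategory.tensorHom_def]
  simp [Phi, eqToHom_trans]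

theorem strict_assoc (x y z : C)
    (P : α.obj ((x ⊗ y) ⊗ z) = H.tObj (H.tObj (α.obj x) (α.obj y)) (α.obj z))
    (Q : α.obj (x ⊗ (y ⊗ z)) = H.tObj (α.obj x) (H.tObj (α.obj y) (α.obj z))) :
    α.map (α_ x y z).hom
      = eqToHom P ≫ (H.aI (α.obj x) (α.obj y) (α.obj z)).hom ≫ eqToHom Q.symm := by
  rw [H.aI_hom_Phi rfl rfl rfl]
  simp [Phi, eqToHom_trans]

theorem strict_braid [SymmetricCategory C] (x y : C) :
    α.map (β_ x y).hom
      = eqToHom (H.hto x y) ≫ (H.bI (α.obj x) (α.obj y)).hom ≫ eqToHom (H.hto y x).symm := by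
  rw [H.bI_hom_Phi rfl rfl]
  simp [Phi, eqToHom_trans]

theorem strict_lu (x : C) (P : α.obj (𝟙_ C ⊗ x) = H.tObj (α.obj (𝟙_ C)) (α.obj x)) :
    α.map (λ_ x).hom = eqToHom P ≫ (H.lI (α.obj x)).hom := by
  rw [H.lI_hom_Phi rfl]
  simp [Phi, eqToHom_trans]

theorem strict_ru (x : C) (P : α.obj (x ⊗ 𝟙_ C) = H.tObj (α.obj x) (α.obj (𝟙_ C))) :
    α.map (ρ_ x).hom = eqToHom P ≫ (H.rI (α.obj x)).hom := by
  rw [H.rI_hom_Phi rfl]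
  simp [Phi, eqToHom_trans]

end GCH
end GCdev

/-- If a semi-additive category `C` carries a symmetric monoidal structure whose tensor
product is additive in each variable, and `α : C ⥤ D` exhibits the preadditive category `D`
as the group completion of `C` (bijective on objects, additive, with every Hom-group of `D`
the Grothendieck group completion of the corresponding Hom-monoid of `C`), then `D` carries
a unique symmetric monoidal structure which is additive in each variable and for which `α`
is strict symmetric monoidal. -/
theorem groupCompletion_symmetric_monoidal
    {C : Type u} [Category.{v} C] [CMonEnriched C] [HasZeroObject C] [HasBinaryBiproducts C]
    [MonoidalCategory C] [SymmetricCategory C]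
    (hwl : ∀ (x : C) ⦃y z : C⦄ (f g : y ⟶ z), x ◁ (f + g) = x ◁ f + x ◁ g)
    (hwl0 : ∀ (x : C) ⦃y z : C⦄, x ◁ (0 : y ⟶ z) = 0)
    (hwr : ∀ ⦃y z : C⦄ (f g : y ⟶ z) (x : C), (f + g) ▷ x = f ▷ x + g ▷ x)
    (hwr0 : ∀ ⦃y z : C⦄ (x : C), (0 : y ⟶ z) ▷ x = 0)
    {D : Type u'} [Category.{v'} D] [Preadditive D]
    (α : C ⥤ D) (hobj : Function.Bijective α.obj)
    (hadd : ∀ {x y : C} (f g : x ⟶ y), α.map (f + g) = α.map f + α.map g)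
    (hzero : ∀ x y : C, α.map (0 : x ⟶ y) = 0)
    (hsurj : ∀ {x y : C} (g : α.obj x ⟶ α.obj y), ∃ f f' : x ⟶ y, g = α.map f - α.map f')
    (hker : ∀ {x y : C} (f f' : x ⟶ y), α.map f = α.map f' ↔ ∃ h : x ⟶ y, f + h = f' + h) :
    ∃! MS : (M : MonoidalCategory D) × @SymmetricCategory D _ M,
      letI := MS.1; letI := MS.2
      -- the tensor product of `D` is additive in each variable
      ((∀ (x : D) ⦃y z : D⦄ (f g : y ⟶ z), x ◁ (f + g) = x ◁ f + x ◁ g) ∧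
       (∀ ⦃y z : D⦄ (f g : y ⟶ z) (x : D), (f + g) ▷ x = f ▷ x + g ▷ x)) ∧
      -- `α` is strict symmetric monoidal
      ∃ (hto : ∀ x y : C, α.obj (x ⊗ y) = α.obj x ⊗ α.obj y)
        (hunit : α.obj (𝟙_ C) = 𝟙_ D),
        (∀ {x y x' y' : C} (f : x ⟶ x') (g : y ⟶ y'),
          α.map (f ⊗ₘ g) =
            eqToHom (hto x y) ≫ (α.map f ⊗ₘ α.map g) ≫ eqToHom (hto x' y').symm) ∧
        (∀ x y : C, α.map (β_ x y).hom =
            eqToHom (hto x y) ≫ (β_ (α.obj x) (α.obj y)).hom ≫ eqToHom (hto y x).symm) ∧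
        (∀ x y z : C, α.map (α_ x y z).hom =
            eqToHom (by rw [hto, hto]) ≫ (α_ (α.obj x) (α.obj y) (α.obj z)).hom ≫
              eqToHom (by rw [hto, hto])) ∧
        (∀ x : C, α.map (λ_ x).hom = eqToHom (by rw [hto, hunit]) ≫ (λ_ (α.obj x)).hom) ∧
        (∀ x : C, α.map (ρ_ x).hom = eqToHom (by rw [hto, hunit]) ≫ (ρ_ (α.obj x)).hom) := by
  have H : GCH α := ⟨hwl, hwl0, hwr, hwr0, hobj, @hadd, hzero, @hsurj, @hker⟩
  refine ⟨⟨H.mcat, H.symcat⟩,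
    ⟨⟨fun X _ _ f g => H.wL_add X f g, fun _ _ f g X => H.wR_add f g X⟩,
      H.hto, rfl, fun {x y x' y'} f g => H.strict_tensor f g, H.strict_braid,
      fun x y z => H.strict_assoc x y z (by rw [← H.hto, ← H.hto]) (by rw [← H.hto, ← H.hto]),
      fun x => H.strict_lu x (by rw [← H.hto]),
      fun x => H.strict_ru x (by rw [← H.hto])⟩, ?_⟩
  rintro ⟨M, S⟩ ⟨⟨Wadd, Radd⟩, hto', hunit', Ht, Hb, Ha, Hl, Hr⟩
  obtain @⟨⟨tO, wl', wr', th', un', as', lu', ru'⟩, td, tid, tc, wli, iwr, an, lun, run, pg, tr⟩ := M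
  obtain @⟨⟨br', bnr, bnl, hxf, hxr⟩, sy⟩ := S
  dsimp +instances only at td tid tc wli iwr an lun run pg tr bnr bnl hxf hxr sy Wadd Radd hto' hunit' Ht Hb Ha Hl Hr
  -- identify the tensor product of objects
  have e1 : tO = H.tObj := by
    funext X Y
    obtain ⟨x, rfl⟩ := H.obj_surj X
    obtain ⟨y, rfl⟩ := H.obj_surj Y
    exact (hto' x y).symm.trans (H.hto x y)
  subst e1
  -- identify whiskerings on α-images
  have wlu : ∀ (x : C) {y z : C} (u : y ⟶ z),
      wl' (α.obj x) (α.map u) = H.wL (α.obj x) (α.map u) := by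
    intro x y z u
    have h1 : th' (α.map (𝟙 x)) (α.map u) = wl' (α.obj x) (α.map u) := by
      rw [td, α.map_id, iwr, Category.id_comp]
    rw [← h1]
    have h2 := Ht (𝟙 x) u
    conv_rhs => rw [H.map_eq_Phi (f := u), H.wL_Phi' rfl rfl rfl]
    have h3 : th' (α.map (𝟙 x)) (α.map u)
        = eqToHom (hto' x y).symm ≫ α.map (𝟙 x ⊗ₘ u) ≫ eqToHom (hto' x z) := by
      rw [h2]; simp [eqToHom_trans]
    rw [h3]
    simp [GCH.Phi, id_tensorHom]
  have wru : ∀ (x : C) {y z : C} (u : y ⟶ z),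
      wr' (α.map u) (α.obj x) = H.wR (α.map u) (α.obj x) := by
    intro x y z u
    have h1 : th' (α.map u) (α.map (𝟙 x)) = wr' (α.map u) (α.obj x) := by
      rw [td, α.map_id, wli, Category.comp_id]
    rw [← h1]
    have h2 := Ht u (𝟙 x)
    conv_rhs => rw [H.map_eq_Phi (f := u), H.wR_Phi' rfl rfl rfl]
    have h3 : th' (α.map u) (α.map (𝟙 x))
        = eqToHom (hto' y x).symm ≫ α.map (u ⊗ₘ 𝟙 x) ≫ eqToHom (hto' z x) := by
      rw [h2]; simp [eqToHom_trans]
    rw [h3]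
    simp [GCH.Phi, tensorHom_id]
  have e2 : wl' = H.wL := by
    funext X Y Z g
    obtain ⟨x, rfl⟩ := H.obj_surj X
    obtain ⟨y, rfl⟩ := H.obj_surj Y
    obtain ⟨z, rfl⟩ := H.obj_surj Z
    obtain ⟨u, u', rfl⟩ := H.hsurj g
    have hsub : wl' (α.obj x) (α.map u - α.map u')
        = wl' (α.obj x) (α.map u) - wl' (α.obj x) (α.map u') := by
      have h := Wadd (α.obj x) (α.map u - α.map u') (α.map u')
      rw [sub_add_cancel] at h
      exact eq_sub_of_add_eq h.symm
    rw [hsub, wlu, wlu, ← H.wL_sub]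
  subst e2
  have e3 : @wr' = fun {Y Z} (g : Y ⟶ Z) (X : D) => H.wR g X := by
    funext Y Z g X
    obtain ⟨x, rfl⟩ := H.obj_surj X
    obtain ⟨y, rfl⟩ := H.obj_surj Y
    obtain ⟨z, rfl⟩ := H.obj_surj Z
    obtain ⟨u, u', rfl⟩ := H.hsurj g
    have hsub : wr' (α.map u - α.map u') (α.obj x)
        = wr' (α.map u) (α.obj x) - wr' (α.map u') (α.obj x) := by
      have h := Radd (α.map u - α.map u') (α.map u') (α.obj x)
      rw [sub_add_cancel] at h
      exact eq_sub_of_add_eq h.symm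
    rw [hsub, wru, wru, ← H.wR_sub]
  subst e3
  have e4 : @th' = fun {X₁ Y₁ X₂ Y₂} f g => H.wR f X₂ ≫ H.wL Y₁ g := by
    funext X₁ Y₁ X₂ Y₂ f g
    exact td f g
  subst e4
  have e5 : as' = H.aI := by
    funext X Y Z
    obtain ⟨x, rfl⟩ := H.obj_surj X
    obtain ⟨y, rfl⟩ := H.obj_surj Y
    obtain ⟨z, rfl⟩ := H.obj_surj Z
    ext
    rw [H.aI_hom_Phi rfl rfl rfl]
    have h2 : (as' (α.obj x) (α.obj y) (α.obj z)).hom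
        = eqToHom (show H.tObj (H.tObj (α.obj x) (α.obj y)) (α.obj z) = α.obj ((x ⊗ y) ⊗ z) by
            rw [← H.hto, ← H.hto]) ≫ α.map (α_ x y z).hom ≫
          eqToHom (show α.obj (x ⊗ (y ⊗ z)) = H.tObj (α.obj x) (H.tObj (α.obj y) (α.obj z)) by
            rw [← H.hto, ← H.hto]) := by
      rw [Ha x y z]; simp [eqToHom_trans]
    rw [h2]
    simp [GCH.Phi]
  subst e5
  have e8 : br' = H.bI := by
    funext X Y
    obtain ⟨x, rfl⟩ := H.obj_surj X
    obtain ⟨y, rfl⟩ := H.obj_surj Y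
    ext
    rw [H.bI_hom_Phi rfl rfl]
    have h2 : (br' (α.obj x) (α.obj y)).hom
        = eqToHom (show H.tObj (α.obj x) (α.obj y) = α.obj (x ⊗ y) by rw [← H.hto]) ≫
            α.map (β_ x y).hom ≫
          eqToHom (show α.obj (y ⊗ x) = H.tObj (α.obj y) (α.obj x) by rw [← H.hto]) := by
      rw [Hb x y]; simp [eqToHom_trans]
    rw [h2]
    simp [GCH.Phi]
  subst e8
  -- now deal with the unit and the unitors
  have QL : ∀ x : C, H.tObj un' (α.obj x) = α.obj (𝟙_ C ⊗ x) := by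
    intro x; rw [← hunit', ← H.hto]
  have L2 : ∀ x : C, (lu' (α.obj x)).hom = eqToHom (QL x) ≫ α.map (λ_ x).hom := by
    intro x; rw [Hl x]; simp [eqToHom_trans]
  have QR : ∀ x : C, H.tObj (α.obj x) un' = α.obj (x ⊗ 𝟙_ C) := by
    intro x; rw [← hunit', ← H.hto]
  have R2 : ∀ x : C, (ru' (α.obj x)).hom = eqToHom (QR x) ≫ α.map (ρ_ x).hom := by
    intro x; rw [Hr x]; simp [eqToHom_trans]
  clear Hl Hr Ht
  subst hunit'
  have e6 : lu' = H.lI := by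
    funext X
    obtain ⟨x, rfl⟩ := H.obj_surj X
    ext
    rw [L2 x, H.lI_hom_Phi rfl]
    simp [GCH.Phi]
  subst e6
  have e7 : ru' = H.rI := by
    funext X
    obtain ⟨x, rfl⟩ := H.obj_surj X
    ext
    rw [R2 x, H.rI_hom_Phi rfl]
    simp [GCH.Phi]
  subst e7
  rfl
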